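/- arXiv:1201.1796 — 6 statements merged into one kernel-verified Lean document; each statement's English description precedes it below -/
import Mathlib

section
/- For a regular sequential method G, the G-sequentially connected component of any point x of X is a G-sequentially closed subset of X. -/
open Filter Topology Pointwise

/-- A method of sequential convergence on an additive group `X`: an additive
function defined on a subgroup of the group of `X`-valued sequences. -/
structure SeqMethod (X : Type*) [AddGroup X] where
  dom : AddSubgroup (ℕ → X)
  toFun : dom →+ X

namespace SeqMethod

variable {X : Type*} [AddGroup X]

/-- `s` G-converges to `l`. -/
def Converges (M : SeqMethod X) (s : ℕ → X) (l : X) : Prop :=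
  ∃ h : s ∈ M.dom, M.toFun ⟨s, h⟩ = l

/-- The G-sequential closure of `A`. -/
def GClosure (M : SeqMethod X) (A : Set X) : Set X :=
  {l | ∃ s : ℕ → X, (∀ n, s n ∈ A) ∧ M.Converges s l}

/-- `A` is G-sequentially closed. -/
def GClosed (M : SeqMethod X) (A : Set X) : Prop := M.GClosure A ⊆ A

/-- `A` is G-sequentially open. -/
def GOpen (M : SeqMethod X) (A : Set X) : Prop := M.GClosed Aᶜ

/-- `M` is regular: every convergent sequence G-converges to its limit. -/
def Regular [TopologicalSpace X] (M : SeqMethod X) : Prop :=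
  ∀ (s : ℕ → X) (l : X), Tendsto s atTop (𝓝 l) → M.Converges s l

/-- `A` is G-sequentially connected: `A` is nonempty and there are no nonempty
disjoint G-sequentially closed subsets of `X`, each meeting `A`, covering `A`. -/
def GConnected (M : SeqMethod X) (A : Set X) : Prop :=
  A.Nonempty ∧ ¬ ∃ U V : Set X, M.GClosed U ∧ M.GClosed V ∧
    (U ∩ A).Nonempty ∧ (V ∩ A).Nonempty ∧ Disjoint U V ∧ A ⊆ U ∪ V

/-- The G-sequentially connected component of `x` inside a subset `A`. -/
def ComponentIn (M : SeqMethod X) (A : Set X) (x : X) : Set X :=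
  ⋃₀ {C : Set X | x ∈ C ∧ C ⊆ A ∧ M.GConnected C}

/-- The G-sequentially connected component of `x` in `X`. -/
def Component (M : SeqMethod X) (x : X) : Set X :=
  ⋃₀ {C : Set X | x ∈ C ∧ M.GConnected C}

/-- `f` is G-sequentially continuous on `X`. -/
def GCont (M : SeqMethod X) (f : X → X) : Prop :=
  ∀ (s : ℕ → X) (u : X), M.Converges s u → M.Converges (fun n => f (s n)) (f u)

/-- `f` is G-sequentially continuous on the subset `A`. -/
def GContOn (M : SeqMethod X) (f : X → X) (A : Set X) : Prop :=
  ∀ (s : ℕ → X) (u : X), (∀ n, s n ∈ A) → u ∈ A →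
    M.Converges s u → M.Converges (fun n => f (s n)) (f u)

/-- `F` is G-sequentially closed in `A`. -/
def GClosedIn (M : SeqMethod X) (A F : Set X) : Prop :=
  ∃ U : Set X, M.GClosed U ∧ F = U ∩ A

/-- `V` is G-sequentially open in `A`. -/
def GOpenIn (M : SeqMethod X) (A V : Set X) : Prop :=
  V ⊆ A ∧ M.GClosedIn A (A \ V)

/-- The set of G-sequentially connected components of points of `A`. -/
def pi0 (M : SeqMethod X) (A : Set X) : Set (Set X) :=
  {C : Set X | ∃ x ∈ A, C = M.ComponentIn A x}

/-- `X` is G-sequentially locally connected. -/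
def GLocConn (M : SeqMethod X) : Prop :=
  ∀ (x : X) (U : Set X), M.GOpen U → x ∈ U →
    ∃ V : Set X, M.GConnected V ∧ (∃ O : Set X, M.GOpen O ∧ x ∈ O ∧ O ⊆ V) ∧
      x ∈ V ∧ V ⊆ U

/-- A subset `A` is G-sequentially locally connected (with the relative
G-sequentially open sets). -/
def GLocConnOn (M : SeqMethod X) (A : Set X) : Prop :=
  ∀ a ∈ A, ∀ U : Set X, M.GOpenIn A U → a ∈ U →
    ∃ V : Set X, M.GConnected V ∧ (∃ O : Set X, M.GOpenIn A O ∧ a ∈ O ∧ O ⊆ V) ∧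
      a ∈ V ∧ V ⊆ U

end SeqMethod

open SeqMethod

variable {X : Type*} [AddGroup X] [TopologicalSpace X] [IsTopologicalAddGroup X]
  [FirstCountableTopology X] [T2Space X]

lemma subset_gClosure (M : SeqMethod X) (hreg : M.Regular) (A : Set X) :
    A ⊆ M.GClosure A := fun a ha =>
  ⟨fun _ => a, fun _ => ha, hreg _ a tendsto_const_nhds⟩

lemma gClosure_mono (M : SeqMethod X) {A B : Set X} (h : A ⊆ B) :
    M.GClosure A ⊆ M.GClosure B := fun _ ⟨s, hs, hc⟩ => ⟨s, fun n => h (hs n), hc⟩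

lemma gConnected_singleton (M : SeqMethod X) (x : X) : M.GConnected {x} := by
  refine ⟨⟨x, rfl⟩, ?_⟩
  rintro ⟨U, V, _, _, ⟨u, hu, hu'⟩, ⟨v, hv, hv'⟩, hd, -⟩
  rw [Set.mem_singleton_iff] at hu' hv'
  subst hu'; subst hv'
  exact hd.ne_of_mem hu hv rfl

lemma gConnected_component (M : SeqMethod X) (x : X) :
    M.GConnected (M.Component x) := by
  refine ⟨⟨x, {x}, ⟨rfl, gConnected_singleton M x⟩, rfl⟩, ?_⟩
  rintro ⟨U, V, hU, hV, ⟨u, hu, Cu, ⟨hxCu, hCu⟩, huC⟩, ⟨v, hv, Cv, ⟨hxCv, hCv⟩, hvC⟩,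
    hd, hsub⟩
  have hxUV : x ∈ U ∪ V := hsub ⟨{x}, ⟨rfl, gConnected_singleton M x⟩, rfl⟩
  have key : ∀ (C : Set X), x ∈ C → M.GConnected C → x ∈ U → C ⊆ U := by
    intro C hxC hC hxU
    intro y hy
    by_contra hyU
    have hyV : y ∈ V := (hsub ⟨C, ⟨hxC, hC⟩, hy⟩).resolve_left hyU
    exact hC.2 ⟨U, V, hU, hV, ⟨x, hxU, hxC⟩, ⟨y, hyV, hy⟩, hd,
      fun z hz => hsub ⟨C, ⟨hxC, hC⟩, hz⟩⟩
  have key' : ∀ (C : Set X), x ∈ C → M.GConnected C → x ∈ V → C ⊆ V := by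
    intro C hxC hC hxV
    intro y hy
    by_contra hyV
    have hyU : y ∈ U := (hsub ⟨C, ⟨hxC, hC⟩, hy⟩).resolve_right hyV
    exact hC.2 ⟨U, V, hU, hV, ⟨y, hyU, hy⟩, ⟨x, hxV, hxC⟩, hd,
      fun z hz => hsub ⟨C, ⟨hxC, hC⟩, hz⟩⟩
  rcases hxUV with hxU | hxV
  · exact hd.ne_of_mem (key Cv hxCv hCv hxU hvC) hv rfl
  · exact hd.ne_of_mem hu (key' Cu hxCu hCu hxV huC) rfl

lemma gConnected_gClosure (M : SeqMethod X) (hreg : M.Regular) {A : Set X}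
    (hA : M.GConnected A) : M.GConnected (M.GClosure A) := by
  refine ⟨hA.1.mono (subset_gClosure M hreg A), ?_⟩
  rintro ⟨U, V, hU, hV, ⟨u, hu, hu'⟩, ⟨v, hv, hv'⟩, hd, hsub⟩
  have hAsub : A ⊆ U ∪ V := (subset_gClosure M hreg A).trans hsub
  have hAU : (U ∩ A).Nonempty := by
    by_contra h
    have hAV : A ⊆ V := fun a ha => (hAsub ha).resolve_left
      (fun haU => h ⟨a, haU, ha⟩)
    exact hd.ne_of_mem hu (hV ((gClosure_mono M hAV) hu')) rfl
  have hAV : (V ∩ A).Nonempty := by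
    by_contra h
    have hAU' : A ⊆ U := fun a ha => (hAsub ha).resolve_right
      (fun haV => h ⟨a, haV, ha⟩)
    exact hd.ne_of_mem (hU ((gClosure_mono M hAU') hv')) hv rfl
  exact hA.2 ⟨U, V, hU, hV, hAU, hAV, hd, hAsub⟩

theorem component_gClosed (M : SeqMethod X) (hreg : M.Regular) (x : X) :
    M.GClosed (M.Component x) := by
  intro l hl
  have hx : x ∈ M.GClosure (M.Component x) :=
    subset_gClosure M hreg _ ⟨{x}, ⟨rfl, gConnected_singleton M x⟩, rfl⟩
  have hmem : M.GClosure (M.Component x) ∈ {C : Set X | x ∈ C ∧ M.GConnected C} :=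
    ⟨hx, gConnected_gClosure M hreg (gConnected_component M x)⟩
  exact Set.subset_sUnion_of_mem hmem hl
end

section
/- For a regular sequential method G on a topological group X, the G-sequentially connected component K of the identity element 0 is a G-sequentially closed normal subgroup of X. -/
open Filter Topology Pointwise

open SeqMethod

variable {X : Type*} [AddGroup X] [TopologicalSpace X] [IsTopologicalAddGroup X]
  [FirstCountableTopology X] [T2Space X]


namespace SeqMethod

variable {X : Type*} [AddGroup X] [TopologicalSpace X] [IsTopologicalAddGroup X]
  [FirstCountableTopology X] [T2Space X]

lemma converges_const (M : SeqMethod X) (hreg : M.Regular) (a : X) :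
    M.Converges (fun _ => a) a := hreg _ _ tendsto_const_nhds

lemma subset_gClosure (M : SeqMethod X) (hreg : M.Regular) (A : Set X) : A ⊆ M.GClosure A :=
  fun a ha => ⟨fun _ => a, fun _ => ha, M.converges_const hreg a⟩

lemma gClosure_mono (M : SeqMethod X) {A B : Set X} (h : A ⊆ B) :
    M.GClosure A ⊆ M.GClosure B := by
  rintro l ⟨s, hs, hc⟩
  exact ⟨s, fun n => h (hs n), hc⟩

lemma gConnected_singleton (M : SeqMethod X) (x : X) : M.GConnected {x} := by
  refine ⟨⟨x, rfl⟩, ?_⟩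
  rintro ⟨U, V, _, _, ⟨u, huU, rfl⟩, ⟨v, hvV, rfl⟩, hd, _⟩
  exact Set.disjoint_left.mp hd huU hvV

lemma gClosed_preimage (M : SeqMethod X) {f : X → X} (hf : M.GCont f) {U : Set X}
    (hU : M.GClosed U) : M.GClosed (f ⁻¹' U) := by
  rintro l ⟨s, hs, hc⟩
  exact hU ⟨fun n => f (s n), hs, hf s l hc⟩

lemma gConnected_image (M : SeqMethod X) {f : X → X} (hf : M.GCont f) {A : Set X}
    (hA : M.GConnected A) : M.GConnected (f '' A) := by
  obtain ⟨⟨a, ha⟩, hnc⟩ := hA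
  refine ⟨⟨f a, a, ha, rfl⟩, ?_⟩
  rintro ⟨U, V, hU, hV, ⟨_, huU, a1, ha1, rfl⟩, ⟨_, hvV, a2, ha2, rfl⟩, hd, hcov⟩
  exact hnc ⟨f ⁻¹' U, f ⁻¹' V, M.gClosed_preimage hf hU, M.gClosed_preimage hf hV,
    ⟨a1, huU, ha1⟩, ⟨a2, hvV, ha2⟩, hd.preimage f, fun z hz => hcov ⟨z, hz, rfl⟩⟩

lemma gConnected_sUnion (M : SeqMethod X) {S : Set (Set X)} {x : X}
    (hx : ∀ C ∈ S, x ∈ C) (hS : ∀ C ∈ S, M.GConnected C) (hne : S.Nonempty) :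
    M.GConnected (⋃₀ S) := by
  obtain ⟨C0, hC0⟩ := hne
  refine ⟨⟨x, C0, hC0, hx _ hC0⟩, ?_⟩
  rintro ⟨U, V, hU, hV, ⟨u, huU, Cu, hCu, huC⟩, ⟨v, hvV, Cv, hCv, hvC⟩, hd, hcov⟩
  cases hcov ⟨C0, hC0, hx _ hC0⟩ with
  | inl hxU =>
    exact (hS Cv hCv).2 ⟨U, V, hU, hV, ⟨x, hxU, hx _ hCv⟩, ⟨v, hvV, hvC⟩, hd,
      fun z hz => hcov ⟨Cv, hCv, hz⟩⟩
  | inr hxV =>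
    exact (hS Cu hCu).2 ⟨U, V, hU, hV, ⟨u, huU, huC⟩, ⟨x, hxV, hx _ hCu⟩, hd,
      fun z hz => hcov ⟨Cu, hCu, hz⟩⟩

lemma gConnected_gClosure (M : SeqMethod X) (hreg : M.Regular) {A : Set X}
    (hA : M.GConnected A) : M.GConnected (M.GClosure A) := by
  obtain ⟨⟨a, ha⟩, hnc⟩ := hA
  refine ⟨⟨a, M.subset_gClosure hreg A ha⟩, ?_⟩
  rintro ⟨U, V, hU, hV, ⟨u, huU, huA⟩, ⟨v, hvV, hvA⟩, hd, hcov⟩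
  have hAsub : A ⊆ U ∪ V := fun z hz => hcov (M.subset_gClosure hreg A hz)
  have hUA : (U ∩ A).Nonempty := by
    by_contra h
    have hAV : A ⊆ V := fun z hz => (hAsub hz).resolve_left (fun hzU => h ⟨z, hzU, hz⟩)
    exact Set.disjoint_left.mp hd huU (hV (M.gClosure_mono hAV huA))
  have hVA : (V ∩ A).Nonempty := by
    by_contra h
    have hAU : A ⊆ U := fun z hz => (hAsub hz).resolve_right (fun hzV => h ⟨z, hzV, hz⟩)
    exact Set.disjoint_left.mp hd (hU (M.gClosure_mono hAU hvA)) hvV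
  exact hnc ⟨U, V, hU, hV, hUA, hVA, hd, hAsub⟩

lemma zero_mem_component_zero (M : SeqMethod X) : (0 : X) ∈ M.Component 0 :=
  ⟨{0}, ⟨rfl, M.gConnected_singleton 0⟩, rfl⟩

lemma subset_component_zero (M : SeqMethod X) {C : Set X} (h0 : (0 : X) ∈ C)
    (hC : M.GConnected C) : C ⊆ M.Component 0 :=
  fun z hz => ⟨C, ⟨h0, hC⟩, hz⟩

lemma gConnected_component_zero (M : SeqMethod X) : M.GConnected (M.Component (0 : X)) :=
  M.gConnected_sUnion (fun _ hC => hC.1) (fun _ hC => hC.2)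
    ⟨{0}, rfl, M.gConnected_singleton 0⟩

lemma gCont_sub_left (M : SeqMethod X) (hreg : M.Regular) (a : X) :
    M.GCont (fun z => a - z) := by
  rintro s u ⟨hs, hsu⟩
  obtain ⟨hca, hcau⟩ := M.converges_const hreg a
  refine ⟨sub_mem hca hs, ?_⟩
  have he : (⟨fun n => a - s n, sub_mem hca hs⟩ : M.dom)
      = ⟨fun _ => a, hca⟩ - ⟨s, hs⟩ := rfl
  rw [he, map_sub, hcau, hsu]

lemma gCont_conj (M : SeqMethod X) (hreg : M.Regular) (a : X) :
    M.GCont (fun z => a + z - a) := by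
  rintro s u ⟨hs, hsu⟩
  obtain ⟨hca, hcau⟩ := M.converges_const hreg a
  refine ⟨sub_mem (add_mem hca hs) hca, ?_⟩
  have he : (⟨fun n => a + s n - a, sub_mem (add_mem hca hs) hca⟩ : M.dom)
      = ⟨fun _ => a, hca⟩ + ⟨s, hs⟩ - ⟨fun _ => a, hca⟩ := rfl
  rw [he, map_sub, map_add, hcau, hsu]

end SeqMethod

theorem component_zero_gClosed_normal_subgroup (M : SeqMethod X) (hreg : M.Regular) :
    M.GClosed (M.Component (0 : X)) ∧
    (0 : X) ∈ M.Component (0 : X) ∧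
    (∀ x ∈ M.Component (0 : X), ∀ y ∈ M.Component (0 : X),
      x - y ∈ M.Component (0 : X)) ∧
    (∀ a : X, ∀ x ∈ M.Component (0 : X), a + x - a ∈ M.Component (0 : X)) := by
  have hK := M.gConnected_component_zero
  have h0 := M.zero_mem_component_zero
  refine ⟨?_, h0, ?_, ?_⟩
  · intro l hl
    exact M.subset_component_zero (M.subset_gClosure hreg _ h0)
      (M.gConnected_gClosure hreg hK) hl
  · intro x hx y hy
    have hC : M.GConnected ((fun z => x - z) '' M.Component 0) :=
      M.gConnected_image (M.gCont_sub_left hreg x) hK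
    have hxC : x ∈ (fun z => x - z) '' M.Component 0 := ⟨0, h0, by simp⟩
    have hU : M.GConnected (⋃₀ {M.Component (0:X), (fun z => x - z) '' M.Component 0}) := by
      refine M.gConnected_sUnion (x := x) ?_ ?_ ⟨_, Or.inl rfl⟩
      · rintro C (rfl | rfl)
        exacts [hx, hxC]
      · rintro C (rfl | rfl)
        exacts [hK, hC]
    have hsub := M.subset_component_zero (C := ⋃₀ {M.Component (0:X), _})
      ⟨_, Or.inl rfl, h0⟩ hU
    exact hsub ⟨_, Or.inr rfl, ⟨y, hy, rfl⟩⟩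
  · intro a x hx
    have hC : M.GConnected ((fun z => a + z - a) '' M.Component 0) :=
      M.gConnected_image (M.gCont_conj hreg a) hK
    have h0C : (0 : X) ∈ (fun z => a + z - a) '' M.Component 0 := ⟨0, h0, by simp⟩
    exact M.subset_component_zero h0C hC ⟨x, hx, rfl⟩
end

section
/- Let G be a regular sequential method on X. If X is generated by a G-sequentially connected symmetric neighbourhood U of the identity (every element of X is a finite sum of elements of U), then X is G-sequentially connected. -/
open Filter Topology Pointwise

open SeqMethod

variable {X : Type*} [AddGroup X] [TopologicalSpace X] [IsTopologicalAddGroup X]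
  [FirstCountableTopology X] [T2Space X]

theorem gConnected_of_generated_by_connected_nhd (M : SeqMethod X) (hreg : M.Regular)
    (U : Set X) (hU : U ∈ 𝓝 (0 : X)) (hsym : U = -U) (hconn : M.GConnected U)
    (hgen : ∀ x : X, ∃ l : List X, (∀ u ∈ l, u ∈ U) ∧ l.sum = x) :
    M.GConnected (Set.univ : Set X) := by
  have h0U : (0 : X) ∈ U := mem_of_mem_nhds hU
  have hconst : ∀ y : X, M.Converges (fun _ => y) y := fun y =>
    hreg _ _ tendsto_const_nhds
  have hadd : ∀ (s : ℕ → X) (l y : X), M.Converges s l →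
      M.Converges (fun n => s n + y) (l + y) := by
    rintro s l y ⟨hs, hsl⟩
    obtain ⟨hc, hcl⟩ := hconst y
    refine ⟨M.dom.add_mem hs hc, ?_⟩
    have heq : (⟨fun n => s n + y, M.dom.add_mem hs hc⟩ : M.dom)
        = ⟨s, hs⟩ + ⟨fun _ => y, hc⟩ := rfl
    rw [heq, map_add, hsl, hcl]
  -- preimages of G-closed sets under right translation are G-closed
  have hpre : ∀ (D : Set X) (y : X), M.GClosed D →
      M.GClosed ((fun u => u + y) ⁻¹' D) := by
    rintro D y hD l ⟨s, hsD, hsl⟩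
    exact hD ⟨fun n => s n + y, fun n => hsD n, hadd s l y hsl⟩
  -- right translates of U are G-connected
  have htrans : ∀ y : X, M.GConnected ((fun u => u + y) '' U) := by
    intro y
    refine ⟨⟨0 + y, 0, h0U, rfl⟩, ?_⟩
    rintro ⟨D₁, D₂, hD₁, hD₂, ⟨z₁, hz₁, u₁, hu₁, rfl⟩, ⟨z₂, hz₂, u₂, hu₂, rfl⟩,
      hdis, hcov⟩
    apply hconn.2
    refine ⟨(fun u => u + y) ⁻¹' D₁, (fun u => u + y) ⁻¹' D₂,
      hpre D₁ y hD₁, hpre D₂ y hD₂, ⟨u₁, hz₁, hu₁⟩, ⟨u₂, hz₂, hu₂⟩,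
      ?_, ?_⟩
    · exact Set.disjoint_left.mpr fun a ha ha' =>
        Set.disjoint_left.mp hdis ha ha'
    · intro u hu
      exact hcov ⟨u, hu, rfl⟩
  refine ⟨⟨0, trivial⟩, ?_⟩
  rintro ⟨C₁, C₂, hC₁, hC₂, ⟨x₁, hx₁, -⟩, ⟨x₂, hx₂, -⟩, hdisj, hcov⟩
  -- key step: adding an element of U on the left does not change the side
  have step : ∀ a ∈ U, ∀ y : X, (a + y ∈ C₁ ↔ y ∈ C₁) := by
    intro a ha y
    have hSconn := htrans y
    have hycov : ∀ z : X, z ∈ C₁ ∨ z ∈ C₂ := fun z => hcov trivial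
    have hnotboth : ¬ ((C₁ ∩ ((fun u => u + y) '' U)).Nonempty ∧
        (C₂ ∩ ((fun u => u + y) '' U)).Nonempty) := by
      rintro ⟨h1, h2⟩
      exact hSconn.2 ⟨C₁, C₂, hC₁, hC₂, h1, h2, hdisj,
        fun z _ => hycov z⟩
    have hyS : y ∈ (fun u => u + y) '' U := ⟨0, h0U, zero_add y⟩
    have haS : a + y ∈ (fun u => u + y) '' U := ⟨a, ha, rfl⟩
    constructor
    · intro h1
      by_contra h2
      rcases hycov y with hy | hy
      · exact h2 hy
      · exact hnotboth ⟨⟨a + y, h1, haS⟩, ⟨y, hy, hyS⟩⟩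
    · intro h1
      by_contra h2
      rcases hycov (a + y) with hy | hy
      · exact h2 hy
      · exact hnotboth ⟨⟨y, h1, hyS⟩, ⟨a + y, hy, haS⟩⟩
  have hsum : ∀ l : List X, (∀ u ∈ l, u ∈ U) → (l.sum ∈ C₁ ↔ (0 : X) ∈ C₁) := by
    intro l
    induction l with
    | nil => intro _; simp
    | cons a t ih =>
      intro hl
      rw [List.sum_cons, step a (hl a (List.mem_cons_self (a := a) (l := t))) t.sum]
      exact ih fun u hu => hl u (List.mem_cons_of_mem a hu)
  rcases hcov (Set.mem_univ (0 : X)) with h0 | h0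
  · obtain ⟨l, hl, hls⟩ := hgen x₂
    have : x₂ ∈ C₁ := by rw [← hls]; exact (hsum l hl).mpr h0
    exact Set.disjoint_left.mp hdisj this hx₂
  · obtain ⟨l, hl, hls⟩ := hgen x₁
    have h0' : (0 : X) ∈ C₁ := by
      rw [← hls] at hx₁; exact (hsum l hl).mp hx₁
    exact Set.disjoint_left.mp hdisj h0' h0
end

section
/- Let G be a regular sequential method on X. If X is G-sequentially connected, then X is generated by any G-sequentially open symmetric neighbourhood U of the identity, i.e., the subgroup of X generated by U equals X. -/
open Filter Topology Pointwise

open SeqMethod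

variable {X : Type*} [AddGroup X] [TopologicalSpace X] [IsTopologicalAddGroup X]
  [FirstCountableTopology X] [T2Space X]

theorem generated_by_gOpen_nhd_of_gConnected (M : SeqMethod X) (hreg : M.Regular)
    (hconn : M.GConnected (Set.univ : Set X))
    (U : Set X) (hU : U ∈ 𝓝 (0 : X)) (hsym : U = -U) (hopen : M.GOpen U) :
    AddSubgroup.closure U = (⊤ : AddSubgroup X) := by
  have hU0 : (0 : X) ∈ U := mem_of_mem_nhds hU
  set H := AddSubgroup.closure U with hHdef
  have hUH : U ⊆ (H : Set X) := AddSubgroup.subset_closure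
  -- sum of two convergent sequences converges to the sum
  have hadd : ∀ (s t : ℕ → X) (l m : X), M.Converges s l → M.Converges t m →
      M.Converges (s + t) (l + m) := by
    rintro s t l m ⟨hs, rfl⟩ ⟨ht, rfl⟩
    refine ⟨add_mem hs ht, ?_⟩
    show M.toFun (⟨s, hs⟩ + ⟨t, ht⟩) = _
    exact map_add M.toFun _ _
  have hconst : ∀ a : X, M.Converges (fun _ => a) a := fun a =>
    hreg _ _ tendsto_const_nhds
  -- left translates of U are G-open
  have htrans : ∀ a : X, M.GOpen {x | -a + x ∈ U} := by
    intro a l ⟨s, hsmem, hconv⟩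
    intro hl
    have h2 : M.Converges ((fun _ => -a) + s) (-a + l) := hadd _ _ _ _ (hconst (-a)) hconv
    have : (-a + l) ∈ Uᶜ := hopen ⟨_, fun n => hsmem n, h2⟩
    exact this hl
  -- H is G-closed
  have hHc : M.GClosed (H : Set X) := by
    rintro l ⟨s, hsmem, hconv⟩
    by_contra hl
    have hTsub : {x | -l + x ∈ U} ⊆ (↑H : Set X)ᶜ := by
      intro x hx hxH
      exact hl (by simpa using sub_mem hxH (hUH hx : -l + x ∈ H))
    have : l ∈ {x | -l + x ∈ U}ᶜ :=
      htrans l ⟨s, fun n => fun hn => hTsub hn (hsmem n), hconv⟩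
    exact this (by simpa using hU0)
  -- Hᶜ is G-closed (H is G-open)
  have hHoc : M.GClosed ((H : Set X)ᶜ) := by
    rintro l ⟨s, hsmem, hconv⟩
    intro hl
    have hTsub : {x | -l + x ∈ U} ⊆ (H : Set X) := by
      intro x hx
      have : l + (-l + x) ∈ H := add_mem hl (hUH hx)
      simpa using this
    have : l ∈ {x | -l + x ∈ U}ᶜ :=
      htrans l ⟨s, fun n => fun hn => hsmem n (hTsub hn), hconv⟩
    exact this (by simpa using hU0)
  -- connectedness forces Hᶜ = ∅
  have hempty : (↑H : Set X)ᶜ = ∅ := by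
    by_contra hne
    obtain ⟨y, hy⟩ := Set.nonempty_iff_ne_empty.2 hne
    exact hconn.2 ⟨(H : Set X), (↑H : Set X)ᶜ, hHc, hHoc,
      ⟨0, H.zero_mem, trivial⟩, ⟨y, hy, trivial⟩,
      disjoint_compl_right, by intro x _; exact (em (x ∈ (H : Set X))).imp id id⟩
  rw [AddSubgroup.eq_top_iff']
  intro x
  by_contra hx
  exact absurd (hempty ▸ hx : x ∈ (∅ : Set X)) (Set.notMem_empty x)
end

section
/- If X is G-sequentially locally connected, then each G-sequentially connected component of X is G-sequentially open. -/
open Filter Topology Pointwise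

open SeqMethod

variable {X : Type*} [AddGroup X] [TopologicalSpace X] [IsTopologicalAddGroup X]
  [FirstCountableTopology X] [T2Space X]

lemma gconn_union_aux {Y : Type*} [AddGroup Y] (M : SeqMethod Y) {A B : Set Y} {p : Y}
    (hpA : p ∈ A) (hpB : p ∈ B) (hA : M.GConnected A) (hB : M.GConnected B) :
    M.GConnected (A ∪ B) := by
  refine ⟨⟨p, Or.inl hpA⟩, ?_⟩
  rintro ⟨U, V, hU, hV, ⟨u, huU, huAB⟩, ⟨v, hvV, hvAB⟩, hdisj, hcov⟩
  -- p is in U or V; wlog-like case split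
  have key : ∀ U V : Set Y, M.GClosed U → M.GClosed V → Disjoint U V →
      A ∪ B ⊆ U ∪ V → p ∈ U → A ∪ B ⊆ U := by
    intro U V hU hV hdisj hcov hpU
    have hsubA : A ⊆ U := by
      by_contra hnA
      obtain ⟨a, haA, haU⟩ := Set.not_subset.mp hnA
      have haV : a ∈ V := (hcov (Or.inl haA)).resolve_left haU
      exact hA.2 ⟨U, V, hU, hV, ⟨p, hpU, hpA⟩, ⟨a, haV, haA⟩, hdisj,
        fun z hz => hcov (Or.inl hz)⟩
    have hsubB : B ⊆ U := by
      by_contra hnB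
      obtain ⟨b, hbB, hbU⟩ := Set.not_subset.mp hnB
      have hbV : b ∈ V := (hcov (Or.inr hbB)).resolve_left hbU
      exact hB.2 ⟨U, V, hU, hV, ⟨p, hpU, hpB⟩, ⟨b, hbV, hbB⟩, hdisj,
        fun z hz => hcov (Or.inr hz)⟩
    exact Set.union_subset hsubA hsubB
  rcases hcov (Or.inl hpA) with hpU | hpV
  · have := key U V hU hV hdisj hcov hpU
    exact hdisj.ne_of_mem (this hvAB) hvV rfl
  · have := key V U hV hU hdisj.symm (fun z hz => (hcov hz).symm) hpV
    exact hdisj.symm.ne_of_mem (this huAB) huU rfl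

theorem component_gOpen_of_gLocConn (M : SeqMethod X) (h : M.GLocConn) (x : X) :
    M.GOpen (M.Component x) := by
  intro l hl
  by_contra hlc
  simp only [Set.mem_compl_iff, not_not] at hlc
  obtain ⟨C, ⟨hxC, hCconn⟩, hlC⟩ := hlc
  have huniv : M.GOpen (Set.univ : Set X) := by
    rintro z ⟨s, hs, _⟩
    exact absurd trivial (hs 0)
  obtain ⟨V, hVconn, ⟨O, hOopen, hlO, hOV⟩, hlV, _⟩ := h l Set.univ huniv trivial
  have hVC : M.GConnected (V ∪ C) := gconn_union_aux M hlV hlC hVconn hCconn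
  have hsub : V ∪ C ⊆ M.Component x :=
    Set.subset_sUnion_of_mem ⟨Or.inr hxC, hVC⟩
  obtain ⟨s, hs, hconv⟩ := hl
  have : l ∈ Oᶜ := hOopen ⟨s, fun n => fun hn => hs n (hsub (Or.inl (hOV hn))), hconv⟩
  exact this hlO
end

section
/- If G is a regular sequential method and A is a G-sequentially connected subset of X, then the G-sequential closure of A is G-sequentially connected. -/
open Filter Topology Pointwise

open SeqMethod

variable {X : Type*} [AddGroup X] [TopologicalSpace X] [IsTopologicalAddGroup X]
  [FirstCountableTopology X] [T2Space X]

theorem gClosure_gConnected (M : SeqMethod X) (hreg : M.Regular)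
    (A : Set X) (hA : M.GConnected A) : M.GConnected (M.GClosure A) := by
  obtain ⟨⟨a, ha⟩, hconn⟩ := hA
  have hsub : A ⊆ M.GClosure A := fun x hx =>
    ⟨fun _ => x, fun _ => hx, hreg _ _ tendsto_const_nhds⟩
  constructor
  · exact ⟨a, hsub ha⟩
  rintro ⟨U, V, hU, hV, ⟨u, huU, hucl⟩, ⟨v, hvV, hvcl⟩, hdisj, hcov⟩
  have hAU : A ⊆ U ∪ V := fun x hx => hcov (hsub hx)
  -- if A ∩ V = ∅ then A ⊆ U hence GClosure A ⊆ U, contradiction with v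
  have key : ∀ W W' : Set X, M.GClosed W → Disjoint W W' → A ⊆ W ∪ W' →
      (W' ∩ A = ∅) → M.GClosure A ⊆ W := by
    intro W W' hW hd hcovA hempty l hl
    obtain ⟨s, hs, hc⟩ := hl
    apply hW
    refine ⟨s, fun n => ?_, hc⟩
    rcases hcovA (hs n) with h | h
    · exact h
    · exact absurd (Set.mem_inter h (hs n)) (by simp [hempty])
  have hVA : (V ∩ A).Nonempty := by
    by_contra h
    have := key U V hU hdisj hAU (Set.not_nonempty_iff_eq_empty.mp h) hvcl
    exact hdisj.ne_of_mem this hvV rfl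
  have hUA : (U ∩ A).Nonempty := by
    by_contra h
    have := key V U hV hdisj.symm (fun x hx => (hAU hx).symm)
      (Set.not_nonempty_iff_eq_empty.mp h) hucl
    exact hdisj.ne_of_mem huU this rfl
  exact hconn ⟨U, V, hU, hV, hUA, hVA, hdisj, fun x hx => hcov (hsub hx)⟩
end
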